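/- Let T : X ⇉ X* be a multivalued operator such that for every α* ∈ X*, the linear perturbation T + α* (defined by (T + α*)(x) = T(x) + α*) is pre-maximal pseudomonotone. Then T is pre-maximal monotone (i.e. both T and T^μ are monotone) and T^μ is pre-maximal pseudomonotone. -/

import Mathlib

open NormedSpace

section PseudoDefs

variable {X : Type*} [NormedAddCommGroup X] [NormedSpace ℝ X]

/-- `(x,x*) ∼_p (y,y*)`: the pseudomonotone relation. -/
def PseudoRel (p q : X × StrongDual ℝ X) : Prop :=
  min (q.2 (p.1 - q.1)) (p.2 (q.1 - p.1)) < 0 ∨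
    (q.2 (p.1 - q.1) = 0 ∧ p.2 (q.1 - p.1) = 0)

/-- An operator (identified with its graph) is pseudomonotone if any two of its
elements are pseudomonotonically related. -/
def Pseudomonotone (T : Set (X × StrongDual ℝ X)) : Prop :=
  ∀ p ∈ T, ∀ q ∈ T, PseudoRel p q

/-- The pseudomonotone polar `T^ρ`. -/
def pPolar (T : Set (X × StrongDual ℝ X)) : Set (X × StrongDual ℝ X) :=
  {p | ∀ q ∈ T, PseudoRel p q}

/-- The monotone polar `T^μ`. -/
def mPolar (T : Set (X × StrongDual ℝ X)) : Set (X × StrongDual ℝ X) :=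
  {p | ∀ q ∈ T, 0 ≤ (p.2 - q.2) (p.1 - q.1)}

/-- A monotone operator. -/
def MonotoneOp (T : Set (X × StrongDual ℝ X)) : Prop :=
  ∀ p ∈ T, ∀ q ∈ T, 0 ≤ (p.2 - q.2) (p.1 - q.1)

/-- The image `T(x)` of an operator at a point. -/
def img (T : Set (X × StrongDual ℝ X)) (x : X) : Set (StrongDual ℝ X) :=
  {x' | (x, x') ∈ T}

/-- The domain of an operator. -/
def opDom (T : Set (X × StrongDual ℝ X)) : Set X :=
  {x | (img T x).Nonempty}

/-- The set of zeros `Z_T` of an operator. -/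
def zeros (T : Set (X × StrongDual ℝ X)) : Set X :=
  {x | (x, (0 : StrongDual ℝ X)) ∈ T}

/-- The strict conic hull `cone_∘(A)` of a subset of the dual. -/
def coneS (A : Set (StrongDual ℝ X)) : Set (StrongDual ℝ X) :=
  {v | ∃ t : ℝ, 0 < t ∧ ∃ a ∈ A, v = t • a}

/-- The conic hull `cone(A)` of a subset of the dual. -/
def coneH (A : Set (StrongDual ℝ X)) : Set (StrongDual ℝ X) :=
  {v | ∃ t : ℝ, 0 ≤ t ∧ ∃ a ∈ A, v = t • a}

/-- The operator `cone_∘(T)`, with `(cone_∘(T))(x) = cone_∘(T(x))`. -/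
def coneOp (T : Set (X × StrongDual ℝ X)) : Set (X × StrongDual ℝ X) :=
  {p | p.2 ∈ coneS (img T p.1)}

/-- The normal cone `N_C(x)`. -/
def normalCone (C : Set X) (x : X) : Set (StrongDual ℝ X) :=
  {x' | ∀ y ∈ C, x' (y - x) ≤ 0}

/-- The strict normal cone `N°_C(x)`. -/
def strictNormalCone (C : Set X) (x : X) : Set (StrongDual ℝ X) :=
  {x' | ∀ y ∈ C, x' (y - x) < 0}

/-- `V_T(x) = {y : ∃ y* ∈ T(y), ⟨x - y, y*⟩ > 0}`. -/
def Vset (T : Set (X × StrongDual ℝ X)) (x : X) : Set X :=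
  {y | ∃ y' ∈ img T y, 0 < y' (x - y)}

/-- `W_T(x) = {y : ∃ y* ∈ T(y), ⟨x - y, y*⟩ = 0}`. -/
def Wset (T : Set (X × StrongDual ℝ X)) (x : X) : Set X :=
  {y | ∃ y' ∈ img T y, y' (x - y) = 0}

/-- Maximal pseudomonotonicity. -/
def MaxPseudomonotone (T : Set (X × StrongDual ℝ X)) : Prop :=
  Pseudomonotone T ∧ ∀ S : Set (X × StrongDual ℝ X), T ⊆ S → Pseudomonotone S → T = S

/-- Pre-maximal pseudomonotonicity: both `T` and `T^ρ` are pseudomonotone. -/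
def PreMaxPseudomonotone (T : Set (X × StrongDual ℝ X)) : Prop :=
  Pseudomonotone T ∧ Pseudomonotone (pPolar T)

/-- The restriction `T|_A` of an operator to a set `A`. -/
def restrictOp (T : Set (X × StrongDual ℝ X)) (A : Set X) : Set (X × StrongDual ℝ X) :=
  {p ∈ T | p.1 ∈ A}

/-- `L(T,x) = {y : ∃ y* ∈ T(y), ⟨x - y, y*⟩ ≥ 0}`. -/
def Lset (T : Set (X × StrongDual ℝ X)) (x : X) : Set X :=
  {y | ∃ y' ∈ img T y, 0 ≤ y' (x - y)}

/-- The operator `T̂ `: `T̂(x) = N_{L(T,x)}(x)` on `Z_T`, `cone_∘(T(x))` on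
`dom(T) \ Z_T`, and `∅` outside `dom(T)`. -/
def hatOp (T : Set (X × StrongDual ℝ X)) : Set (X × StrongDual ℝ X) :=
  {p | (p.1 ∈ zeros T ∧ p.2 ∈ normalCone (Lset T p.1) p.1) ∨
       (p.1 ∈ opDom T ∧ p.1 ∉ zeros T ∧ p.2 ∈ coneS (img T p.1))}

/-- Two operators are equivalent: same domain, same zeros, and the same conic
hulls of images outside the set of zeros. -/
def EquivOp (T S : Set (X × StrongDual ℝ X)) : Prop :=
  opDom T = opDom S ∧ zeros T = zeros S ∧
    ∀ x ∈ opDom T \ zeros T, coneH (img T x) = coneH (img S x)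

/-- `D`-maximal pseudomonotonicity (Hadjisavvas): `T` is pseudomonotone and some
equivalent pseudomonotone operator has no proper pseudomonotone extension with
the same domain. -/
def DMaxPseudomonotone (T : Set (X × StrongDual ℝ X)) : Prop :=
  Pseudomonotone T ∧ ∃ S : Set (X × StrongDual ℝ X), EquivOp T S ∧ Pseudomonotone S ∧
    ∀ S' : Set (X × StrongDual ℝ X), S ⊆ S' → Pseudomonotone S' → opDom S' = opDom S → S' = S

/-- The solution set of the Stampacchia variational inequality problem. -/
def SVIsol (T : Set (X × StrongDual ℝ X)) (K : Set X) : Set X :=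
  {x ∈ K | ∃ x' ∈ img T x, ∀ y ∈ K, 0 ≤ x' (y - x)}

/-- The solution set of the Minty variational inequality problem. -/
def MVIsol (T : Set (X × StrongDual ℝ X)) (K : Set X) : Set X :=
  {x ∈ K | ∀ q ∈ T, q.1 ∈ K → q.2 (x - q.1) ≤ 0}

/-- The linear perturbation `T + α*`. -/
def pertOp (T : Set (X × StrongDual ℝ X)) (α : StrongDual ℝ X) : Set (X × StrongDual ℝ X) :=
  {p | ∃ q ∈ T, p = (q.1, q.2 + α)}

end PseudoDefs


section Aux

variable {X : Type*} [NormedAddCommGroup X] [NormedSpace ℝ X]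

lemma mono_pseudoRel {p q : X × StrongDual ℝ X}
    (h : 0 ≤ (p.2 - q.2) (p.1 - q.1)) : PseudoRel p q := by
  have key : p.2 (q.1 - p.1) = - p.2 (p.1 - q.1) := by
    rw [← neg_sub, map_neg]
  have h' : q.2 (p.1 - q.1) ≤ p.2 (p.1 - q.1) := by
    simp only [ContinuousLinearMap.sub_apply] at h; linarith
  rcases lt_or_ge (q.2 (p.1 - q.1)) 0 with hb | hb
  · exact Or.inl (lt_of_le_of_lt (min_le_left _ _) hb)
  rcases lt_or_ge (p.2 (q.1 - p.1)) 0 with hd | hd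
  · exact Or.inl (lt_of_le_of_lt (min_le_right _ _) hd)
  · rw [key] at hd
    exact Or.inr ⟨by linarith, by rw [key]; linarith⟩

lemma pseudo_subset {S S' : Set (X × StrongDual ℝ X)} (hs : S ⊆ S')
    (h : Pseudomonotone S') : Pseudomonotone S :=
  fun p hp q hq => h p (hs hp) q (hs hq)

lemma pPolar_anti {S S' : Set (X × StrongDual ℝ X)} (hs : S ⊆ S') :
    pPolar S' ⊆ pPolar S :=
  fun p hp q hq => hp q (hs hq)

lemma mono_of_pert (M : Set (X × StrongDual ℝ X))
    (h : ∀ α : StrongDual ℝ X, Pseudomonotone (pertOp M α)) : MonotoneOp M := by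
  intro p hp q hq
  by_contra hneg
  push_neg at hneg
  simp only [ContinuousLinearMap.sub_apply] at hneg
  set a := p.2 (p.1 - q.1) with ha
  set b := q.2 (p.1 - q.1) with hb
  have hab : a < b := by linarith
  have hxy : p.1 - q.1 ≠ 0 := by
    intro h0
    rw [ha, hb, h0] at hab
    simp at hab
  obtain ⟨f, -, hf⟩ := exists_dual_vector ℝ (p.1 - q.1) (norm_ne_zero_iff.mpr hxy)
  have hfr : f (p.1 - q.1) = ‖p.1 - q.1‖ := by exact_mod_cast hf
  set t : ℝ := -(a + b) / 2 with ht
  set α : StrongDual ℝ X := (t / ‖p.1 - q.1‖) • f with hα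
  have hnorm : ‖p.1 - q.1‖ ≠ 0 := norm_ne_zero_iff.mpr hxy
  have hαval : α (p.1 - q.1) = t := by
    rw [hα]
    simp only [ContinuousLinearMap.smul_apply, hfr, smul_eq_mul]
    field_simp
  have hmem1 : (p.1, p.2 + α) ∈ pertOp M α := ⟨p, hp, rfl⟩
  have hmem2 : (q.1, q.2 + α) ∈ pertOp M α := ⟨q, hq, rfl⟩
  have hrel := h α _ hmem1 _ hmem2
  have e1 : (q.2 + α) (p.1 - q.1) = b + t := by
    simp [ContinuousLinearMap.add_apply, hαval, hb]
  have e2 : (p.2 + α) (q.1 - p.1) = -(a + t) := by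
    have : (p.2 + α) (q.1 - p.1) = -((p.2 + α) (p.1 - q.1)) := by
      rw [← neg_sub, map_neg]
    rw [this]
    simp [ContinuousLinearMap.add_apply, hαval, ha]
  rcases hrel with h1 | h2
  · simp only [e1, e2] at h1
    have := min_lt_iff.mp h1
    rcases this with h3 | h3 <;> rw [ht] at h3 <;> linarith
  · obtain ⟨h3, h4⟩ := h2
    simp only [e1, e2] at h3 h4
    rw [ht] at h3
    linarith

lemma pertOp_zero (M : Set (X × StrongDual ℝ X)) : pertOp M 0 = M := by
  ext p
  constructor
  · rintro ⟨q, hq, rfl⟩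
    simpa using hq
  · intro hp
    exact ⟨p, hp, by simp⟩

end Aux

theorem preMaxMonotone_of_perturbations
    {X : Type*} [NormedAddCommGroup X] [NormedSpace ℝ X]
    (T : Set (X × StrongDual ℝ X))
    (h : ∀ α : StrongDual ℝ X, PreMaxPseudomonotone (pertOp T α)) :
    (MonotoneOp T ∧ MonotoneOp (mPolar T)) ∧ PreMaxPseudomonotone (mPolar T) := by
  have hTmono : MonotoneOp T := mono_of_pert T (fun α => (h α).1)
  have hsub : ∀ α : StrongDual ℝ X, pertOp (mPolar T) α ⊆ pPolar (pertOp T α) := by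
    rintro α p ⟨r, hr, rfl⟩ q ⟨s, hs, rfl⟩
    apply mono_pseudoRel
    have := hr s hs
    simp only [ContinuousLinearMap.sub_apply, ContinuousLinearMap.add_apply] at this ⊢
    linarith
  have hμmono : MonotoneOp (mPolar T) :=
    mono_of_pert _ (fun α => pseudo_subset (hsub α) ((h α).2))
  have hTsub : T ⊆ mPolar T := fun p hp q hq => hTmono p hp q hq
  have hpT : Pseudomonotone (pPolar T) := by
    have := (h 0).2
    rwa [pertOp_zero] at this
  refine ⟨⟨hTmono, hμmono⟩, ?_, ?_⟩
  · exact fun p hp q hq => mono_pseudoRel (hμmono p hp q hq)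
  · exact pseudo_subset (pPolar_anti hTsub) hpT
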